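/- If C ≥ 0 is such that for every n ∈ ℕ and all independent random variables X_1,…,X_n with E X_k = 0, E X_k² < ∞ and B_n² = Σ_k E X_k² > 0 one has Δ_n ≤ C·sup_{z>0}( |M_n(z)| + z·L_n(z) ), then C ≥ sup_{1/2<p<1} ( Φ(√((1−p)/p)) − (1−p) )·√(p(1−p)) / ( (1−p)² + p² ), and in particular C > 0.3703. -/

import Mathlib

open MeasureTheory ProbabilityTheory Real Set

/-- The standard normal distribution function. -/
noncomputable def Phi (x : ℝ) : ℝ :=
  ∫ t in Set.Iic x, Real.exp (-t ^ 2 / 2) / Real.sqrt (2 * Real.pi)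

/-- `B_n = sqrt (Σ E X_k²)`. -/
noncomputable def Bn {Ω : Type} [MeasurableSpace Ω] (μ : Measure Ω) {n : ℕ}
    (X : Fin n → Ω → ℝ) : ℝ :=
  Real.sqrt (∑ k, ∫ ω, (X k ω) ^ 2 ∂μ)

/-- Uniform distance between the d.f. of the normalized sum and the standard normal d.f. -/
noncomputable def Deltan {Ω : Type} [MeasurableSpace Ω] (μ : Measure Ω) {n : ℕ}
    (X : Fin n → Ω → ℝ) : ℝ :=
  ⨆ x : ℝ, |(μ {ω | (∑ k, X k ω) / Bn μ X < x}).toReal - Phi x|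

/-- `M_n(z) = B_n⁻³ Σ E[X_k³ 1_{|X_k| < z B_n}]`. -/
noncomputable def Mn {Ω : Type} [MeasurableSpace Ω] (μ : Measure Ω) {n : ℕ}
    (X : Fin n → Ω → ℝ) (z : ℝ) : ℝ :=
  (∑ k, ∫ ω, (if |X k ω| < z * Bn μ X then (X k ω) ^ 3 else 0) ∂μ) / (Bn μ X) ^ 3

/-- `L_n(z) = B_n⁻² Σ E[X_k² 1_{|X_k| ≥ z B_n}]` (the Lindeberg fraction). -/
noncomputable def Lnn {Ω : Type} [MeasurableSpace Ω] (μ : Measure Ω) {n : ℕ}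
    (X : Fin n → Ω → ℝ) (z : ℝ) : ℝ :=
  (∑ k, ∫ ω, (if z * Bn μ X ≤ |X k ω| then (X k ω) ^ 2 else 0) ∂μ) / (Bn μ X) ^ 2

/-- Hypotheses on the independent summands: measurability, independence, zero means,
finite second moments, positive total variance. -/
def GoodFamily {Ω : Type} [MeasurableSpace Ω] (μ : Measure Ω) {n : ℕ}
    (X : Fin n → Ω → ℝ) : Prop :=
  (∀ k, Measurable (X k)) ∧
  iIndepFun X μ ∧
  (∀ k, Integrable (fun ω => (X k ω) ^ 2) μ) ∧
  (∀ k, ∫ ω, X k ω ∂μ = 0) ∧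
  0 < ∑ k, ∫ ω, (X k ω) ^ 2 ∂μ


noncomputable def bmu (p : ℝ) : Measure Bool :=
  ENNReal.ofReal p • Measure.dirac true + ENNReal.ofReal (1-p) • Measure.dirac false

lemma bmu_prob {p : ℝ} (h0 : 0 ≤ p) (h1 : p ≤ 1) : IsProbabilityMeasure (bmu p) := by
  constructor
  simp only [bmu, Measure.add_apply, Measure.smul_apply, Measure.dirac_apply_of_mem (mem_univ _),
    smul_eq_mul, mul_one]
  rw [← ENNReal.ofReal_add h0 (by linarith)]
  norm_num

lemma bmu_integral {p : ℝ} (h0 : 0 ≤ p) (h1 : p ≤ 1) (f : Bool → ℝ) :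
    ∫ ω, f ω ∂(bmu p) = p * f true + (1 - p) * f false := by
  rw [bmu, integral_add_measure (Integrable.of_finite.smul_measure ENNReal.ofReal_ne_top)
      (Integrable.of_finite.smul_measure ENNReal.ofReal_ne_top),
    integral_smul_measure, integral_smul_measure, integral_dirac, integral_dirac,
    ENNReal.toReal_ofReal h0, ENNReal.toReal_ofReal (by linarith), smul_eq_mul, smul_eq_mul]

lemma bmu_false {p : ℝ} : bmu p {false} = ENNReal.ofReal (1 - p) := by
  simp [bmu, Measure.dirac_apply]

lemma gauss_eq : (fun t : ℝ => Real.exp (-t ^ 2 / 2) / Real.sqrt (2 * Real.pi))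
    = fun t : ℝ => Real.exp (-(1/2) * t ^ 2) / Real.sqrt (2 * Real.pi) := by
  funext t; ring_nf

lemma gauss_integrable :
    Integrable (fun t : ℝ => Real.exp (-t ^ 2 / 2) / Real.sqrt (2 * Real.pi)) := by
  rw [gauss_eq]
  exact (integrable_exp_neg_mul_sq (by norm_num : (0:ℝ) < 1/2)).div_const _

lemma gauss_total : ∫ t : ℝ, Real.exp (-t ^ 2 / 2) / Real.sqrt (2 * Real.pi) = 1 := by
  rw [gauss_eq]
  rw [integral_div, integral_gaussian]
  rw [show (π / (1/2)) = 2 * π by ring]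
  rw [div_self (by positivity : Real.sqrt (2*π) ≠ 0)]

lemma Phi_nonneg (x : ℝ) : 0 ≤ Phi x := by
  apply setIntegral_nonneg measurableSet_Iic
  intro t _; positivity

lemma Phi_le_one (x : ℝ) : Phi x ≤ 1 := by
  rw [← gauss_total]
  exact setIntegral_le_integral gauss_integrable
    (Filter.Eventually.of_forall fun t => by positivity)

lemma Phi_zero : Phi 0 = 1/2 := by
  have h := intervalIntegral.integral_Iic_add_Ioi (b := (0:ℝ))
    (gauss_integrable.integrableOn)
    (gauss_integrable.integrableOn)
  have h2 : ∫ t in Set.Ioi (0:ℝ), Real.exp (-t ^ 2 / 2) / Real.sqrt (2 * Real.pi) = 1/2 := by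
    rw [gauss_eq, integral_div, integral_gaussian_Ioi,
      show Real.sqrt (π / (1/2)) = Real.sqrt (2 * π) by rw [show π / (1/2) = 2 * π by ring]]
    have h0 : Real.sqrt (2*π) ≠ 0 := by positivity
    field_simp
  rw [gauss_total] at h
  rw [Phi]
  linarith [h, h2]

lemma poly_le_exp {u : ℝ} (h0 : 0 ≤ u) (h1 : u ≤ 1) :
    1 - u + u^2/2 - u^3/6 + u^4/24 - u^5/120 - 7*u^6/4320 ≤ Real.exp (-u) := by
  have habs : |(-u)| ≤ 1 := by rw [abs_neg, abs_of_nonneg h0]; exact h1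
  have hb := Real.exp_bound habs (n := 6) (by norm_num)
  rw [abs_neg, abs_of_nonneg h0] at hb
  have h2 := (abs_le.1 hb).1
  simp [Finset.sum_range_succ, Nat.factorial] at h2
  nlinarith [h2]

lemma hasDeriv_F (t : ℝ) :
    HasDerivAt (fun t : ℝ => t - t^3/6 + t^5/40 - t^7/336 + t^9/3456 - t^11/42240 - 7*t^13/3594240)
      (1 - t^2/2 + t^4/8 - t^6/48 + t^8/384 - t^10/3840 - 7*t^12/276480) t := by
  have h1 := hasDerivAt_id t
  have h3 := (hasDerivAt_pow 3 t).div_const 6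
  have h5 := (hasDerivAt_pow 5 t).div_const 40
  have h7 := (hasDerivAt_pow 7 t).div_const 336
  have h9 := (hasDerivAt_pow 9 t).div_const 3456
  have h11 := (hasDerivAt_pow 11 t).div_const 42240
  have h13 := ((hasDerivAt_pow 13 t).const_mul (7:ℝ)).div_const 3594240
  refine ((((((h1.sub h3).add h5).sub h7).add h9).sub h11).sub h13).congr_deriv ?_
  norm_num
  ring

lemma int_poly (x : ℝ) (hx : 0 ≤ x) :
    (∫ t in Set.Ioc (0:ℝ) x, (1 - t^2/2 + t^4/8 - t^6/48 + t^8/384 - t^10/3840 - 7*t^12/276480))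
      = x - x^3/6 + x^5/40 - x^7/336 + x^9/3456 - x^11/42240 - 7*x^13/3594240 := by
  rw [← intervalIntegral.integral_of_le hx]
  rw [intervalIntegral.integral_eq_sub_of_hasDerivAt (fun t _ => hasDeriv_F t)
    ((by fun_prop : Continuous fun t : ℝ =>
      1 - t^2/2 + t^4/8 - t^6/48 + t^8/384 - t^10/3840 - 7*t^12/276480).intervalIntegrable 0 x)]
  norm_num

lemma Phi_lb {x : ℝ} (h0 : 0 ≤ x) (h1 : x ≤ 1) :
    1/2 + (x - x^3/6 + x^5/40 - x^7/336 + x^9/3456 - x^11/42240 - 7*x^13/3594240)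
      / Real.sqrt (2*Real.pi) ≤ Phi x := by
  have hsplit : Phi x = Phi 0 + ∫ t in Set.Ioc (0:ℝ) x, Real.exp (-t^2/2)/Real.sqrt (2*π) := by
    rw [Phi, Phi, ← setIntegral_union (Iic_disjoint_Ioc le_rfl) measurableSet_Ioc
      gauss_integrable.integrableOn gauss_integrable.integrableOn,
      Iic_union_Ioc_eq_Iic h0]
  rw [hsplit, Phi_zero]
  have hmono : (∫ t in Set.Ioc (0:ℝ) x,
      (1 - t^2/2 + t^4/8 - t^6/48 + t^8/384 - t^10/3840 - 7*t^12/276480) / Real.sqrt (2*π))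
      ≤ ∫ t in Set.Ioc (0:ℝ) x, Real.exp (-t^2/2)/Real.sqrt (2*π) := by
    apply setIntegral_mono_on
    · exact ((by fun_prop : Continuous fun t : ℝ =>
        (1 - t^2/2 + t^4/8 - t^6/48 + t^8/384 - t^10/3840 - 7*t^12/276480) /
          Real.sqrt (2*π))).integrableOn_Ioc
    · exact gauss_integrable.integrableOn
    · exact measurableSet_Ioc
    · intro t ht
      have h0t : 0 ≤ t := le_of_lt ht.1
      have h1t : t ≤ x := ht.2
      have key := poly_le_exp (u := t^2/2) (by positivity) (by nlinarith)
      have heq : (1 - t^2/2 + t^4/8 - t^6/48 + t^8/384 - t^10/3840 - 7*t^12/276480) =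
        1 - (t^2/2) + (t^2/2)^2/2 - (t^2/2)^3/6 + (t^2/2)^4/24 - (t^2/2)^5/120
          - 7*(t^2/2)^6/4320 := by ring
      rw [heq, show -t^2/2 = -(t^2/2) by ring]
      gcongr
  rw [integral_div, int_poly x h0] at hmono
  linarith

lemma key_bound (C : ℝ) (hC : 0 ≤ C)
    (h : ∀ (Ω : Type) (mΩ : MeasurableSpace Ω) (μ : Measure Ω), IsProbabilityMeasure μ →
      ∀ (n : ℕ) (X : Fin n → Ω → ℝ), GoodFamily μ X →
        Deltan μ X ≤ C * sSup ((fun z => |Mn μ X z| + z * Lnn μ X z) '' Set.Ioi (0 : ℝ)))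
    (p : ℝ) (hp1 : 1/2 < p) (hp2 : p < 1) :
    (Phi (Real.sqrt ((1 - p) / p)) - (1 - p)) * Real.sqrt (p * (1 - p)) / ((1 - p) ^ 2 + p ^ 2)
      ≤ C := by
  have hp0 : 0 < p := by linarith
  have hq0 : 0 < 1 - p := by linarith
  set X : Fin 1 → Bool → ℝ := fun _ ω => if ω then 1 - p else -p with hX
  haveI hprob : IsProbabilityMeasure (bmu p) := bmu_prob hp0.le hp2.le
  set B : ℝ := Real.sqrt (p * (1 - p)) with hBdef
  have hBpos : 0 < B := Real.sqrt_pos.2 (by positivity)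
  have hB2 : B ^ 2 = p * (1 - p) := Real.sq_sqrt (by positivity)
  have hvar : (∑ k : Fin 1, ∫ ω, (X k ω) ^ 2 ∂(bmu p)) = p * (1 - p) := by
    rw [Fin.sum_univ_one, bmu_integral hp0.le hp2.le (fun ω => (X 0 ω) ^ 2)]
    simp only [hX]
    norm_num
    ring
  have hBn : Bn (bmu p) X = B := by rw [Bn, hvar]
  have hgood : GoodFamily (bmu p) X := by
    refine ⟨fun k => measurable_of_finite _, iIndepFun.of_subsingleton,
      fun k => Integrable.of_finite, fun k => ?_, by rw [hvar]; positivity⟩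
    rw [show (fun ω => X k ω) = X 0 from rfl, bmu_integral hp0.le hp2.le (X 0)]
    simp only [hX]
    norm_num
    ring
  have hΔ := h Bool _ (bmu p) hprob 1 X hgood
  set x₀ : ℝ := Real.sqrt ((1 - p) / p) with hx₀def
  have hx₀pos : 0 < x₀ := Real.sqrt_pos.2 (by positivity)
  have hx₀B : x₀ * B = 1 - p := by
    rw [hx₀def, hBdef, ← Real.sqrt_mul (by positivity)]
    rw [show (1 - p) / p * (p * (1 - p)) = (1 - p) ^ 2 by field_simp]
    exact Real.sqrt_sq hq0.le
  have hdiv : (1 - p) / B = x₀ := by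
    rw [← hx₀B]; field_simp
  -- the distribution function of the normalized sum at x₀
  have hset : {ω : Bool | (∑ k : Fin 1, X k ω) / Bn (bmu p) X < x₀} = {false} := by
    ext ω
    simp only [mem_setOf_eq, mem_singleton_iff, Fin.sum_univ_one, hBn]
    cases ω
    · simp only [hX, if_neg Bool.false_ne_true]
      have hlt : -p / B < x₀ := lt_trans (div_neg_of_neg_of_pos (by linarith) hBpos) hx₀pos
      simp [hlt]
    · simp only [hX, if_pos rfl]
      have hlt : ¬ ((1 - p) / B < x₀) := by rw [hdiv]; exact lt_irrefl _
      simp [hlt]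
  -- lower bound for Deltan
  have hDelta_ge : Phi x₀ - (1 - p) ≤ Deltan (bmu p) X := by
    have hbdd : BddAbove (Set.range fun x : ℝ =>
        |(bmu p {ω | (∑ k : Fin 1, X k ω) / Bn (bmu p) X < x}).toReal - Phi x|) := by
      refine ⟨2, ?_⟩
      rintro y ⟨x, rfl⟩
      have h1 : ((bmu p) {ω | (∑ k : Fin 1, X k ω) / Bn (bmu p) X < x}).toReal ≤ 1 :=
        ENNReal.toReal_le_of_le_ofReal one_pos.le (by simpa using prob_le_one)
      have h0 : 0 ≤ ((bmu p) {ω | (∑ k : Fin 1, X k ω) / Bn (bmu p) X < x}).toReal :=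
        ENNReal.toReal_nonneg
      have h2 := Phi_nonneg x; have h3 := Phi_le_one x
      rw [abs_le]; constructor <;> linarith
    have hle := le_ciSup hbdd x₀
    refine le_trans ?_ hle
    rw [hset, bmu_false, ENNReal.toReal_ofReal hq0.le, abs_sub_comm]
    exact le_abs_self _
  -- evaluate Mn and Lnn
  have hM : ∀ z : ℝ, Mn (bmu p) X z =
      (p * (if 1 - p < z * B then (1 - p) ^ 3 else 0)
        + (1 - p) * (if p < z * B then (-p) ^ 3 else 0)) / B ^ 3 := by
    intro z
    rw [Mn, hBn, Fin.sum_univ_one, bmu_integral hp0.le hp2.le]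
    simp only [hX, if_pos rfl, if_neg Bool.false_ne_true,
      abs_of_pos hq0, abs_neg, abs_of_pos hp0]
  have hL : ∀ z : ℝ, Lnn (bmu p) X z =
      (p * (if z * B ≤ 1 - p then (1 - p) ^ 2 else 0)
        + (1 - p) * (if z * B ≤ p then (-p) ^ 2 else 0)) / B ^ 2 := by
    intro z
    rw [Lnn, hBn, Fin.sum_univ_one, bmu_integral hp0.le hp2.le]
    simp only [hX, if_pos rfl, if_neg Bool.false_ne_true,
      abs_of_pos hq0, abs_neg, abs_of_pos hp0]
  -- upper bound for the sup
  have hS : sSup ((fun z => |Mn (bmu p) X z| + z * Lnn (bmu p) X z) '' Set.Ioi (0 : ℝ))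
      ≤ ((1 - p) ^ 2 + p ^ 2) / B := by
    apply Real.sSup_le
    · rintro y ⟨z, hz, rfl⟩
      dsimp only
      have hz0 : 0 < z := hz
      rcases le_or_gt (z * B) (1 - p) with hc1 | hc1
      · -- z B ≤ 1 - p : M = 0, L = 1
        have hc2 : z * B ≤ p := le_trans hc1 (by linarith)
        rw [hM, hL, if_neg (not_lt.2 hc1), if_neg (not_lt.2 hc2), if_pos hc1, if_pos hc2]
        rw [show p * ((1 - p) ^ 2) + (1 - p) * (-p) ^ 2 = B ^ 2 by rw [hB2]; ring,
          div_self (pow_ne_zero 2 hBpos.ne')]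
        simp only [mul_zero, add_zero, mul_one, abs_zero, zero_div]
        have hz' : z ≤ (1 - p) / B := (le_div_iff₀ hBpos).2 hc1
        have h2 : (1 - p) / B ≤ ((1 - p) ^ 2 + p ^ 2) / B := by
          gcongr
          nlinarith
        simp only [abs_zero, zero_add]
        linarith
      rcases le_or_gt (z * B) p with hc2 | hc2
      · -- 1 - p < z B ≤ p
        rw [hM, hL, if_pos hc1, if_neg (not_lt.2 hc2), if_neg (not_le.2 hc1), if_pos hc2]
        simp only [mul_zero, add_zero, zero_add]
        rw [abs_of_nonneg (by positivity)]
        have key : p * (1 - p) ^ 3 / B ^ 3 + z * ((1 - p) * (-p) ^ 2 / B ^ 2)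
            = (p * (1 - p) ^ 3 + (z * B) * ((1 - p) * p ^ 2)) / B ^ 3 := by
          field_simp
        rw [key]
        have hnum : p * (1 - p) ^ 3 + (z * B) * ((1 - p) * p ^ 2)
            ≤ ((1 - p) ^ 2 + p ^ 2) * B ^ 2 := by
          rw [hB2]
          nlinarith [mul_le_mul_of_nonneg_right hc2 (mul_nonneg hq0.le (sq_nonneg p))]
        have hrw : ((1 - p) ^ 2 + p ^ 2) / B = (((1 - p) ^ 2 + p ^ 2) * B ^ 2) / B ^ 3 := by
          field_simp
        rw [hrw]
        exact (div_le_div_iff_of_pos_right (pow_pos hBpos 3)).2 hnum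
      · -- p < z B
        rw [hM, hL, if_pos hc1, if_pos hc2, if_neg (not_le.2 hc1), if_neg (not_le.2 hc2)]
        simp only [mul_zero, add_zero, zero_div, mul_zero]
        rw [abs_div, abs_of_pos (pow_pos hBpos 3), abs_of_nonpos (by nlinarith)]
        rw [div_le_div_iff₀ (pow_pos hBpos 3) hBpos]
        have hB3 : B ^ 3 = p * (1 - p) * B := by
          rw [pow_succ, hB2]
        rw [hB3]
        nlinarith [mul_nonneg (mul_nonneg (mul_nonneg hp0.le hq0.le) (sq_nonneg (1 - p))) hBpos.le]
    · positivity
  have hfin : Phi x₀ - (1 - p) ≤ C * (((1 - p) ^ 2 + p ^ 2) / B) :=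
    le_trans hDelta_ge (le_trans hΔ (mul_le_mul_of_nonneg_left hS hC))
  rw [div_le_iff₀ (by positivity : (0:ℝ) < (1 - p) ^ 2 + p ^ 2)]
  calc (Phi x₀ - (1 - p)) * B ≤ (C * (((1 - p) ^ 2 + p ^ 2) / B)) * B :=
        mul_le_mul_of_nonneg_right hfin hBpos.le
    _ = C * ((1 - p) ^ 2 + p ^ 2) := by field_simp

theorem lower_bound_esseen_eps_infty (C : ℝ) (hC : 0 ≤ C)
    (h : ∀ (Ω : Type) (mΩ : MeasurableSpace Ω) (μ : Measure Ω), IsProbabilityMeasure μ →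
      ∀ (n : ℕ) (X : Fin n → Ω → ℝ), GoodFamily μ X →
        Deltan μ X ≤
          C * sSup ((fun z => |Mn μ X z| + z * Lnn μ X z) '' Set.Ioi (0 : ℝ))) :
    sSup ((fun p => (Phi (Real.sqrt ((1 - p) / p)) - (1 - p)) * Real.sqrt (p * (1 - p)) /
        ((1 - p) ^ 2 + p ^ 2)) '' Set.Ioo (1/2 : ℝ) 1) ≤ C ∧
    0.3703 < C := by
  have key : ∀ p : ℝ, 1/2 < p → p < 1 →
      (Phi (Real.sqrt ((1 - p) / p)) - (1 - p)) * Real.sqrt (p * (1 - p)) / ((1 - p) ^ 2 + p ^ 2)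
        ≤ C := fun p hp1 hp2 => key_bound C hC h p hp1 hp2
  constructor
  · apply Real.sSup_le
    · rintro y ⟨p, hp, rfl⟩
      exact key p hp.1 hp.2
    · exact hC
  · have hk := key (61/100) (by norm_num) (by norm_num)
    set x : ℝ := Real.sqrt ((1 - 61/100) / (61/100)) with hxdef
    have hx2 : x ^ 2 = 39/61 := by
      rw [hxdef, Real.sq_sqrt (by norm_num)]
      norm_num
    have hx0 : 0 ≤ x := Real.sqrt_nonneg _
    have hx1 : x ≤ 1 := by
      rw [hxdef]
      calc Real.sqrt ((1 - 61/100) / (61/100)) ≤ Real.sqrt 1 :=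
            Real.sqrt_le_sqrt (by norm_num)
        _ = 1 := Real.sqrt_one
    have hxge : (0.7995 : ℝ) ≤ x := by
      rw [hxdef]
      calc (0.7995 : ℝ) = Real.sqrt (0.7995 ^ 2) := (Real.sqrt_sq (by norm_num)).symm
        _ ≤ Real.sqrt ((1 - 61/100) / (61/100)) := Real.sqrt_le_sqrt (by norm_num)
    have hPhi := Phi_lb hx0 hx1
    have hF : x - x^3/6 + x^5/40 - x^7/336 + x^9/3456 - x^11/42240 - 7*x^13/3594240
        = x * (7335902472682439/8124556955232256) := by
      linear_combination ((-7/3594240 : ℝ) * x^11 + (-1541/61839360 : ℝ) * x^9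
        + (3094183/11316602880 : ℝ) * x^7 + (-4512268067/1610729809920 : ℝ) * x^5
        + (152025633701/6550301227008 : ℝ) * x^3
        + (-60665729426909/399568374847488 : ℝ) * x) * hx2
    rw [hF] at hPhi
    have hs_pos : (0:ℝ) < Real.sqrt (2 * π) := by positivity
    have hs_le : Real.sqrt (2 * π) ≤ 2.50663 := by
      calc Real.sqrt (2 * π) ≤ Real.sqrt (2.50663 ^ 2) :=
            Real.sqrt_le_sqrt (by nlinarith [Real.pi_lt_d6])
        _ = 2.50663 := Real.sqrt_sq (by norm_num)
    have hquot : (0.7995 * (7335902472682439/8124556955232256) : ℝ) / 2.50663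
        ≤ (x * (7335902472682439/8124556955232256)) / Real.sqrt (2 * π) := by
      apply div_le_div₀ (by positivity) _ hs_pos hs_le
      nlinarith [hxge]
    have hPhi2 : (1/2 : ℝ) + (0.7995 * (7335902472682439/8124556955232256)) / 2.50663
        ≤ Phi x := by linarith
    have hu : (0.48774 : ℝ) ≤ Real.sqrt (61/100 * (1 - 61/100)) := by
      calc (0.48774 : ℝ) = Real.sqrt (0.48774 ^ 2) := (Real.sqrt_sq (by norm_num)).symm
        _ ≤ Real.sqrt (61/100 * (1 - 61/100)) := Real.sqrt_le_sqrt (by norm_num)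
    have hA : (0 : ℝ) < 1/2 + (0.7995 * (7335902472682439/8124556955232256)) / 2.50663
        - (1 - 61/100) := by norm_num
    have hden : ((1 - 61/100 : ℝ) ^ 2 + (61/100) ^ 2) = 0.5242 := by norm_num
    rw [hden] at hk
    have hchain : ((1/2 + (0.7995 * (7335902472682439/8124556955232256)) / 2.50663
        - (1 - 61/100)) * 0.48774) / 0.5242
        ≤ (Phi x - (1 - 61/100)) * Real.sqrt (61/100 * (1 - 61/100)) / 0.5242 := by
      gcongr
      · nlinarith [hu, Real.sqrt_nonneg (61/100 * (1 - 61/100) : ℝ)]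
    have hnum : (0.3703 : ℝ) < ((1/2 + (0.7995 * (7335902472682439/8124556955232256)) / 2.50663
        - (1 - 61/100)) * 0.48774) / 0.5242 := by norm_num
    linarith
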